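/- On a finite connected directed graph G = (V,E), the unit ball of the dual norm to the graph BV-norm on the space P = {F ∈ S_V : ∑_v F(v) = 0} equals the image under div of the unit ball of ℓ∞(S_E); that is, {ψ ∈ P : sup_{‖grad h‖_{ℓ¹(S_E)} ≤ 1} ⟨ψ, h⟩ ≤ 1} = div({g ∈ S_E : max_e |g(e)| ≤ 1}). -/
import Mathlib


/-- Gradient operator on a directed graph with edge source/target maps. -/
def grad {V E : Type*} (src tgt : E → V) (f : V → ℝ) : E → ℝ :=
  fun e => f (tgt e) - f (src e)

/-- Divergence operator on a directed graph: incoming minus outgoing flow. -/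
def gdiv {V E : Type*} [Fintype E] [DecidableEq V] (src tgt : E → V) (g : E → ℝ) : V → ℝ :=
  fun v => (∑ e : E, if tgt e = v then g e else 0) - (∑ e : E, if src e = v then g e else 0)

/-- Connectedness of the underlying undirected graph. -/
def GConnected {V E : Type*} (src tgt : E → V) : Prop :=
  ∀ v w : V, Relation.ReflTransGen
    (fun a b => ∃ e : E, (src e = a ∧ tgt e = b) ∨ (src e = b ∧ tgt e = a)) v w

lemma sum_proj {V E : Type*} [Fintype V] [Fintype E] [DecidableEq V]
    (f : E → V) (g : E → ℝ) (h : V → ℝ) :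
    ∑ v : V, (∑ e : E, if f e = v then g e else 0) * h v = ∑ e : E, g e * h (f e) := by
  simp_rw [Finset.sum_mul]
  rw [Finset.sum_comm]
  refine Finset.sum_congr rfl fun e _ => ?_
  simp [ite_mul]

lemma adjoint {V E : Type*} [Fintype V] [Fintype E] [DecidableEq V]
    (src tgt : E → V) (g : E → ℝ) (h : V → ℝ) :
    ∑ v : V, gdiv src tgt g v * h v = ∑ e : E, g e * grad src tgt h e := by
  unfold gdiv grad
  simp_rw [sub_mul, mul_sub, Finset.sum_sub_distrib]
  rw [sum_proj tgt g h, sum_proj src g h]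

noncomputable def gdivL {V E : Type*} [Fintype E] [DecidableEq V] (src tgt : E → V) :
    (E → ℝ) →ₗ[ℝ] (V → ℝ) where
  toFun := gdiv src tgt
  map_add' g g' := by
    funext v
    unfold gdiv
    have h1 : ∀ (f : E → V), (∑ e : E, if f e = v then g e + g' e else 0) =
        (∑ e : E, if f e = v then g e else 0) + (∑ e : E, if f e = v then g' e else 0) := by
      intro f
      rw [← Finset.sum_add_distrib]
      refine Finset.sum_congr rfl fun e _ => ?_
      split <;> simp
    simp only [Pi.add_apply, h1]
    ring
  map_smul' c g := by
    funext v
    unfold gdiv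
    have h1 : ∀ (f : E → V), (∑ e : E, if f e = v then c * g e else 0) =
        c * (∑ e : E, if f e = v then g e else 0) := by
      intro f
      rw [Finset.mul_sum]
      refine Finset.sum_congr rfl fun e _ => ?_
      split <;> simp
    simp only [Pi.smul_apply, smul_eq_mul, h1, RingHom.id_apply]
    ring

lemma gdivL_apply {V E : Type*} [Fintype E] [DecidableEq V] (src tgt : E → V) (g : E → ℝ) :
    gdivL src tgt g = gdiv src tgt g := rfl

theorem stmt6 {V E : Type*} [Fintype V] [Fintype E] [DecidableEq V]
    (src tgt : E → V) (hconn : GConnected src tgt) :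
    {ψ : V → ℝ | (∑ v : V, ψ v = 0) ∧
        ∀ h : V → ℝ, (∑ e : E, |grad src tgt h e|) ≤ 1 → ∑ v : V, ψ v * h v ≤ 1} =
      {ψ : V → ℝ | ∃ g : E → ℝ, (∀ e : E, |g e| ≤ 1) ∧ gdiv src tgt g = ψ} := by
  ext ψ
  simp only [Set.mem_setOf_eq]
  constructor
  · rintro ⟨hsum, hdual⟩
    by_contra hnot
    set B : Set (E → ℝ) := {g | ∀ e, |g e| ≤ 1} with hB
    have hBeq : B = Set.pi Set.univ (fun _ : E => Set.Icc (-1:ℝ) 1) := by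
      ext g
      constructor
      · intro hg e _
        exact Set.mem_Icc.mpr (abs_le.mp (hg e))
      · intro hg e
        exact abs_le.mpr (Set.mem_Icc.mp (hg e (Set.mem_univ e)))
    have hBcompact : IsCompact B := by
      rw [hBeq]; exact isCompact_univ_pi fun _ => isCompact_Icc
    have hBconv : Convex ℝ B := by
      rw [hBeq]; exact convex_pi fun _ _ => convex_Icc _ _
    set K : Set (V → ℝ) := gdivL src tgt '' B with hK
    have hKcl : IsClosed K :=
      (hBcompact.image (gdivL src tgt).continuous_of_finiteDimensional).isClosed
    have hKconv : Convex ℝ K := hBconv.linear_image _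
    have hψK : ψ ∉ K := by
      rintro ⟨g, hg, hgψ⟩
      exact hnot ⟨g, hg, hgψ⟩
    obtain ⟨f, u, hfu, huψ⟩ := geometric_hahn_banach_closed_point hKconv hKcl hψK
    set h : V → ℝ := fun v => f (fun j => if v = j then 1 else 0) with hh
    have repr : ∀ x : V → ℝ, f x = ∑ v, x v * h v := by
      intro x
      conv_lhs => rw [pi_eq_sum_univ x]
      rw [map_sum]
      exact Finset.sum_congr rfl fun v _ => by rw [map_smul]; rfl
    have h0K : (0 : V → ℝ) ∈ K := ⟨0, fun e => by simp, by simp⟩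
    have hu0 : 0 < u := by simpa using hfu 0 h0K
    set t := ∑ e, |grad src tgt h e| with hT
    set g0 : E → ℝ := fun e => if 0 ≤ grad src tgt h e then 1 else -1 with hg0def
    have hg0 : ∀ e, |g0 e| ≤ 1 := by
      intro e
      simp only [hg0def]
      split <;> simp
    have hg0K : gdivL src tgt g0 ∈ K := ⟨g0, hg0, rfl⟩
    have hft : f (gdivL src tgt g0) = t := by
      rw [repr, gdivL_apply, adjoint]
      refine Finset.sum_congr rfl fun e _ => ?_
      simp only [hg0def]
      split
      · rw [one_mul, abs_of_nonneg ‹_›]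
      · rw [neg_one_mul, abs_of_neg (lt_of_not_ge ‹_›)]
    have htu : t < u := hft ▸ hfu _ hg0K
    have hψh : u < ∑ v, ψ v * h v := by rw [← repr]; exact huψ
    by_cases ht : t = 0
    · have hgrad0 : ∀ e, grad src tgt h e = 0 := by
        intro e
        have := (Finset.sum_eq_zero_iff_of_nonneg
          (fun e _ => abs_nonneg (grad src tgt h e))).mp ht e (Finset.mem_univ e)
        exact abs_eq_zero.mp this
      have step : ∀ a b : V,
          (∃ e : E, (src e = a ∧ tgt e = b) ∨ (src e = b ∧ tgt e = a)) → h a = h b := by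
        rintro a b ⟨e, (⟨hs, htg⟩ | ⟨hs, htg⟩)⟩ <;>
          · have h0 := hgrad0 e
            unfold grad at h0
            rw [hs, htg] at h0
            linarith
      have hconst : ∀ v w : V, h v = h w := by
        intro v w
        have hc := hconn v w
        induction hc with
        | refl => rfl
        | tail _ hr ih => exact ih.trans (step _ _ hr)
      have hzero : ∑ v, ψ v * h v = 0 := by
        rcases isEmpty_or_nonempty V with hV | hV
        · simp
        · obtain ⟨v0⟩ := hV
          calc ∑ v, ψ v * h v = ∑ v, ψ v * h v0 :=
                Finset.sum_congr rfl fun v _ => by rw [hconst v v0]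
            _ = (∑ v, ψ v) * h v0 := by rw [Finset.sum_mul]
            _ = 0 := by rw [hsum, zero_mul]
      linarith
    · have ht' : 0 < t :=
        lt_of_le_of_ne (Finset.sum_nonneg fun e _ => abs_nonneg _) (Ne.symm ht)
      have hgs : ∀ e, grad src tgt (t⁻¹ • h) e = t⁻¹ * grad src tgt h e := by
        intro e
        unfold grad
        simp only [Pi.smul_apply, smul_eq_mul]
        ring
      have hg1 : ∑ e, |grad src tgt (t⁻¹ • h) e| ≤ 1 := by
        simp_rw [hgs, abs_mul, abs_of_nonneg (inv_nonneg.mpr ht'.le), ← Finset.mul_sum]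
        rw [← hT, inv_mul_cancel₀ ht]
      have hle := hdual (t⁻¹ • h) hg1
      have h2 : ∑ v, ψ v * ((t⁻¹ • h) v) = t⁻¹ * ∑ v, ψ v * h v := by
        rw [Finset.mul_sum]
        refine Finset.sum_congr rfl fun v _ => ?_
        simp only [Pi.smul_apply, smul_eq_mul]
        ring
      rw [h2] at hle
      have h3 : t * t⁻¹ = 1 := mul_inv_cancel₀ ht
      nlinarith
  · rintro ⟨g, hg, rfl⟩
    constructor
    · have := adjoint src tgt g (fun _ => 1)
      simpa [grad] using this
    · intro h hh
      rw [adjoint]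
      calc ∑ e, g e * grad src tgt h e ≤ ∑ e, |grad src tgt h e| := by
            refine Finset.sum_le_sum fun e _ => ?_
            calc g e * grad src tgt h e ≤ |g e * grad src tgt h e| := le_abs_self _
              _ = |g e| * |grad src tgt h e| := abs_mul _ _
              _ ≤ 1 * |grad src tgt h e| :=
                  mul_le_mul_of_nonneg_right (hg e) (abs_nonneg _)
              _ = |grad src tgt h e| := one_mul _
        _ ≤ 1 := hh
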